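/- Let (f_n) be a pointwise non-increasing sequence of non-negative simple functions on ℝ^N such that lim_{n→∞} f_n(x) = 0 for every x ∈ ℝ^N. Then lim_{n→∞} ∫ f_n = 0. -/

import Mathlib

open Filter Topology MeasureTheory

/-- If `(fₙ)` is a pointwise non-increasing sequence of non-negative simple functions on
`ℝ^N` (finite linear combinations of characteristic functions of semi-open intervals)
with `fₙ(x) → 0` for every `x`, then `∫ fₙ → 0`, where the integral of a simple function
`∑ᵢ λᵢ χ_{Iᵢ}` is `∑ᵢ λᵢ μ(Iᵢ)`. -/
theorem simple_functions_decreasing_to_zero_integral (N : ℕ)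
    (m : ℕ → ℕ) (lam : ∀ n, Fin (m n) → ℝ)
    (a b : ∀ n, Fin (m n) → Fin N → ℝ)
    (hab : ∀ n i k, a n i k ≤ b n i k)
    (f : ℕ → (Fin N → ℝ) → ℝ)
    (hf : ∀ n x, f n x = ∑ i, (Set.univ.pi fun k =>
      Set.Ico (a n i k) (b n i k)).indicator (fun _ => lam n i) x)
    (hnonneg : ∀ n x, 0 ≤ f n x)
    (hmono : ∀ x, Antitone fun n => f n x)
    (hlim : ∀ x, Tendsto (fun n => f n x) atTop (𝓝 (0 : ℝ))) :
    Tendsto (fun n => ∑ i, lam n i * ∏ k, (b n i k - a n i k)) atTop (𝓝 (0 : ℝ)) := by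
  have hmeas : ∀ n i, MeasurableSet (Set.univ.pi fun k => Set.Ico (a n i k) (b n i k)) :=
    fun n i => MeasurableSet.univ_pi fun k => measurableSet_Ico
  have hvol : ∀ n i, volume (Set.univ.pi fun k => Set.Ico (a n i k) (b n i k)) =
      ENNReal.ofReal (∏ k, (b n i k - a n i k)) := by
    intro n i
    rw [volume_pi_pi]
    simp only [Real.volume_Ico]
    rw [← ENNReal.ofReal_prod_of_nonneg]
    intro k _
    linarith [hab n i k]
  have hintI : ∀ n (i : Fin (m n)), Integrable
      ((Set.univ.pi fun k => Set.Ico (a n i k) (b n i k)).indicator (fun _ => lam n i)) := by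
    intro n i
    rw [integrable_indicator_iff (hmeas n i)]
    exact integrableOn_const (by rw [hvol n i]; exact ENNReal.ofReal_ne_top) enorm_ne_top
  have hint : ∀ n, Integrable (f n) := by
    intro n
    rw [funext (hf n)]
    exact integrable_finset_sum _ fun i _ => hintI n i
  have hI : ∀ n, ∫ x, f n x = ∑ i, lam n i * ∏ k, (b n i k - a n i k) := by
    intro n
    simp_rw [hf n]
    rw [integral_finset_sum _ fun i _ => hintI n i]
    refine Finset.sum_congr rfl fun i _ => ?_
    rw [integral_indicator_const _ (hmeas n i), measureReal_def, hvol n i,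
      ENNReal.toReal_ofReal (Finset.prod_nonneg fun k _ => by linarith [hab n i k])]
    simp [mul_comm]
  have h := tendsto_integral_of_dominated_convergence (f 0)
    (fun n => (hint n).1) (hint 0)
    (fun n => Filter.Eventually.of_forall fun x => by
      rw [Real.norm_eq_abs, abs_of_nonneg (hnonneg n x)]
      exact hmono x (Nat.zero_le n))
    (Filter.Eventually.of_forall hlim)
  simpa [hI] using h
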